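/- Let Γ be the Paley graph on Z/17Z, where distinct vertices x and y are adjacent iff x − y is a nonzero quadratic residue modulo 17 (equivalently, x − y ∈ {1, 2, 4, 8, 9, 13, 15, 16}). Then Γ contains no clique on 4 vertices and no independent set of 4 vertices. -/
import Mathlib

set_option synthInstance.maxHeartbeats 1000000
set_option synthInstance.maxSize 2000
set_option maxRecDepth 4000
private def Q17 : Finset (ZMod 17) := {1, 2, 4, 8, 9, 13, 15, 16}

private lemma key_in : ∀ b c d : ZMod 17, b ≠ 0 → c ≠ 0 → d ≠ 0 → b ≠ c → b ≠ d → c ≠ d →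
    ¬ (b ∈ Q17 ∧ c ∈ Q17 ∧ d ∈ Q17 ∧ b - c ∈ Q17 ∧ b - d ∈ Q17 ∧ c - d ∈ Q17) := by
  decide

private lemma key_out : ∀ b c d : ZMod 17, b ≠ 0 → c ≠ 0 → d ≠ 0 → b ≠ c → b ≠ d → c ≠ d →
    ¬ (b ∉ Q17 ∧ c ∉ Q17 ∧ d ∉ Q17 ∧ b - c ∉ Q17 ∧ b - d ∉ Q17 ∧ c - d ∉ Q17) := by
  decide

private lemma four_elts {α : Type*} [DecidableEq α] {s : Finset α} (h : s.card = 4) :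
    ∃ a b c d, a ≠ b ∧ a ≠ c ∧ a ≠ d ∧ b ≠ c ∧ b ≠ d ∧ c ≠ d ∧
      a ∈ s ∧ b ∈ s ∧ c ∈ s ∧ d ∈ s := by
  have hpos : 0 < s.card := by omega
  obtain ⟨a, ha⟩ := Finset.card_pos.mp hpos
  have h3 : (s.erase a).card = 3 := by rw [Finset.card_erase_of_mem ha, h]
  obtain ⟨b, c, d, hbc, hbd, hcd, he⟩ := Finset.card_eq_three.mp h3
  have hb : b ∈ s.erase a := by rw [he]; simp
  have hc : c ∈ s.erase a := by rw [he]; simp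
  have hd : d ∈ s.erase a := by rw [he]; simp
  exact ⟨a, b, c, d, (Finset.ne_of_mem_erase hb).symm, (Finset.ne_of_mem_erase hc).symm,
    (Finset.ne_of_mem_erase hd).symm, hbc, hbd, hcd, ha,
    Finset.mem_of_mem_erase hb, Finset.mem_of_mem_erase hc, Finset.mem_of_mem_erase hd⟩

/-- The Paley graph on `ZMod 17` (x adjacent to y iff `x - y` is a nonzero quadratic
residue mod 17) contains no clique on 4 vertices and no independent set of 4 vertices. -/
theorem stmt_5 :
    (¬ ∃ s : Finset (ZMod 17), s.card = 4 ∧ ∀ x ∈ s, ∀ y ∈ s, x ≠ y →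
        x - y ∈ ({1, 2, 4, 8, 9, 13, 15, 16} : Finset (ZMod 17))) ∧
    (¬ ∃ s : Finset (ZMod 17), s.card = 4 ∧ ∀ x ∈ s, ∀ y ∈ s, x ≠ y →
        x - y ∉ ({1, 2, 4, 8, 9, 13, 15, 16} : Finset (ZMod 17))) := by
  constructor
  · rintro ⟨s, hc, hp⟩
    obtain ⟨a, b, c, d, hab, hac, had, hbc, hbd, hcd, ha, hb, hd', hd⟩ := four_elts hc
    refine key_in (b - a) (c - a) (d - a) (sub_ne_zero.mpr hab.symm) (sub_ne_zero.mpr hac.symm)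
      (sub_ne_zero.mpr had.symm) (fun h => hbc (by linear_combination h))
      (fun h => hbd (by linear_combination h)) (fun h => hcd (by linear_combination h)) ?_
    refine ⟨?_, ?_, ?_, ?_, ?_, ?_⟩
    · exact hp b hb a ha hab.symm
    · exact hp c hd' a ha hac.symm
    · exact hp d hd a ha had.symm
    · have := hp b hb c hd' hbc; simpa [sub_sub_sub_cancel_right, Q17] using this
    · have := hp b hb d hd hbd; simpa [sub_sub_sub_cancel_right, Q17] using this
    · have := hp c hd' d hd hcd; simpa [sub_sub_sub_cancel_right, Q17] using this
  · rintro ⟨s, hc, hp⟩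
    obtain ⟨a, b, c, d, hab, hac, had, hbc, hbd, hcd, ha, hb, hd', hd⟩ := four_elts hc
    refine key_out (b - a) (c - a) (d - a) (sub_ne_zero.mpr hab.symm) (sub_ne_zero.mpr hac.symm)
      (sub_ne_zero.mpr had.symm) (fun h => hbc (by linear_combination h))
      (fun h => hbd (by linear_combination h)) (fun h => hcd (by linear_combination h)) ?_
    refine ⟨?_, ?_, ?_, ?_, ?_, ?_⟩
    · exact hp b hb a ha hab.symm
    · exact hp c hd' a ha hac.symm
    · exact hp d hd a ha had.symm
    · have := hp b hb c hd' hbc; simpa [sub_sub_sub_cancel_right, Q17] using this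
    · have := hp b hb d hd hbd; simpa [sub_sub_sub_cancel_right, Q17] using this
    · have := hp c hd' d hd hcd; simpa [sub_sub_sub_cancel_right, Q17] using this
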